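/- Let K be a field containing a primitive cube root of unity ζ₃, let n ≥ 1, and let B_n be the affine K-scheme with coordinate ring K[T_{ij} : 1≤i≤n, 1≤j≤3] modulo the relations T_{i1}+T_{i2}+T_{i3} = 0 for all i and T_{i1}T_{i2}+T_{i1}T_{i3}+T_{i2}T_{i3} = T_{11}T_{12}+T_{11}T_{13}+T_{12}T_{13} for all i. Then B_n is isomorphic over K to the closed subscheme of Spec K[z_{i1}, z_{i2} : 1≤i≤n] defined by the equations z_{11}z_{12} = z_{21}z_{22} = ⋯ = z_{n1}z_{n2}, via the map z_{ij} ↦ T_{i1} − ζ₃^j T_{i2}. -/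

import Mathlib

set_option maxHeartbeats 1000000

open MvPolynomial

noncomputable def stmtBnIdeal (K : Type) [Field K] (n : ℕ) :
    Ideal (MvPolynomial (Fin (n + 1) × Fin 3) K) :=
  Ideal.span
    ((Set.range fun i : Fin (n + 1) =>
        (X (i, 0) + X (i, 1) + X (i, 2) : MvPolynomial (Fin (n + 1) × Fin 3) K)) ∪
      (Set.range fun i : Fin (n + 1) =>
        (X (i, 0) * X (i, 1) + X (i, 0) * X (i, 2) + X (i, 1) * X (i, 2)
          - (X (0, 0) * X (0, 1) + X (0, 0) * X (0, 2) + X (0, 1) * X (0, 2)) :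
          MvPolynomial (Fin (n + 1) × Fin 3) K)))

noncomputable def stmtZnIdeal (K : Type) [Field K] (n : ℕ) :
    Ideal (MvPolynomial (Fin (n + 1) × Fin 2) K) :=
  Ideal.span
    (Set.range fun i : Fin (n + 1) =>
      (X (i, 0) * X (i, 1) - X (0, 0) * X (0, 1) :
        MvPolynomial (Fin (n + 1) × Fin 2) K))

lemma stmtBn_mem1 (K : Type) [Field K] (n : ℕ) (i : Fin (n + 1)) :
    (X (i, 0) + X (i, 1) + X (i, 2) : MvPolynomial (Fin (n + 1) × Fin 3) K)
      ∈ stmtBnIdeal K n :=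
  Ideal.subset_span (Set.mem_union_left _ ⟨i, rfl⟩)

lemma stmtBn_mem2 (K : Type) [Field K] (n : ℕ) (i : Fin (n + 1)) :
    (X (i, 0) * X (i, 1) + X (i, 0) * X (i, 2) + X (i, 1) * X (i, 2)
        - (X (0, 0) * X (0, 1) + X (0, 0) * X (0, 2) + X (0, 1) * X (0, 2)) :
        MvPolynomial (Fin (n + 1) × Fin 3) K) ∈ stmtBnIdeal K n :=
  Ideal.subset_span (Set.mem_union_right _ ⟨i, rfl⟩)

lemma stmtZn_mem (K : Type) [Field K] (n : ℕ) (i : Fin (n + 1)) :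
    (X (i, 0) * X (i, 1) - X (0, 0) * X (0, 1) :
      MvPolynomial (Fin (n + 1) × Fin 2) K) ∈ stmtZnIdeal K n :=
  Ideal.subset_span ⟨i, rfl⟩

/-- The forward substitution on polynomial rings: `z_{ij} ↦ T_{i1} - ζ^{j+1} T_{i2}`. -/
noncomputable def stmtFp (K : Type) [Field K] (ζ : K) (n : ℕ) :
    MvPolynomial (Fin (n + 1) × Fin 2) K →ₐ[K] MvPolynomial (Fin (n + 1) × Fin 3) K :=
  aeval fun p => X (p.1, 0) - C (ζ ^ ((p.2 : ℕ) + 1)) * X (p.1, 1)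

/-- The backward substitution on polynomial rings:
`T_{i,k} ↦ d·ζ^{4k+2} z_{i1} - d·ζ^{2k+1} z_{i2}` where `d = (ζ²-ζ)⁻¹`. -/
noncomputable def stmtGp (K : Type) [Field K] (ζ d : K) (n : ℕ) :
    MvPolynomial (Fin (n + 1) × Fin 3) K →ₐ[K] MvPolynomial (Fin (n + 1) × Fin 2) K :=
  aeval fun p =>
    C d * C ζ ^ (4 * (p.2 : ℕ) + 2) * X (p.1, 0)
      - C d * C ζ ^ (2 * (p.2 : ℕ) + 1) * X (p.1, 1)

noncomputable def stmtF (K : Type) [Field K] (ζ : K) (n : ℕ) :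
    MvPolynomial (Fin (n + 1) × Fin 2) K →ₐ[K]
      MvPolynomial (Fin (n + 1) × Fin 3) K ⧸ stmtBnIdeal K n :=
  (Ideal.Quotient.mkₐ K (stmtBnIdeal K n)).comp (stmtFp K ζ n)

noncomputable def stmtG (K : Type) [Field K] (ζ d : K) (n : ℕ) :
    MvPolynomial (Fin (n + 1) × Fin 3) K →ₐ[K]
      MvPolynomial (Fin (n + 1) × Fin 2) K ⧸ stmtZnIdeal K n :=
  (Ideal.Quotient.mkₐ K (stmtZnIdeal K n)).comp (stmtGp K ζ d n)

lemma stmtF_vanish (K : Type) [Field K] (ζ : K) (hsum : ζ ^ 2 + ζ + 1 = 0) (n : ℕ) :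
    ∀ a ∈ stmtZnIdeal K n, stmtF K ζ n a = 0 := by
  have h1 : (C ζ ^ 2 + C ζ + 1 : MvPolynomial (Fin (n + 1) × Fin 3) K) = 0 := by
    have := congrArg (C : K → MvPolynomial (Fin (n + 1) × Fin 3) K) hsum
    simpa [C_pow] using this
  intro a ha
  rw [stmtZnIdeal, Ideal.span] at ha
  induction ha using Submodule.span_induction with
  | zero => exact map_zero _
  | add x y _ _ hx hy => rw [map_add, hx, hy, add_zero]
  | smul r x _ hx => rw [smul_eq_mul, map_mul, hx, mul_zero]
  | mem x hx =>
    obtain ⟨i, rfl⟩ := hx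
    rw [stmtF, AlgHom.comp_apply, Ideal.Quotient.mkₐ_eq_mk, Ideal.Quotient.eq_zero_iff_mem]
    have hc : ((X (i, 0) + X (i, 1)) * (X (i, 0) + X (i, 1) + X (i, 2))
        - (X (0, 0) + X (0, 1)) * (X (0, 0) + X (0, 1) + X (0, 2))
        - (X (i, 0) * X (i, 1) + X (i, 0) * X (i, 2) + X (i, 1) * X (i, 2)
          - (X (0, 0) * X (0, 1) + X (0, 0) * X (0, 2) + X (0, 1) * X (0, 2))) :
        MvPolynomial (Fin (n + 1) × Fin 3) K) ∈ stmtBnIdeal K n :=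
      sub_mem (sub_mem (Ideal.mul_mem_left _ _ (stmtBn_mem1 K n i))
        (Ideal.mul_mem_left _ _ (stmtBn_mem1 K n 0))) (stmtBn_mem2 K n i)
    convert hc using 2
    simp only [stmtFp, map_sub, map_mul, aeval_X,
      show ((0 : Fin 2) : ℕ) = 0 from rfl, show ((1 : Fin 2) : ℕ) = 1 from rfl]
    norm_num
    linear_combination (- X (i, 0) * X (i, 1) + (C ζ - 1) * X (i, 1) ^ 2
      + X (0, 0) * X (0, 1) - (C ζ - 1) * X (0, 1) ^ 2) * h1

lemma stmtG_vanish (K : Type) [Field K] (ζ d : K) (hsum : ζ ^ 2 + ζ + 1 = 0)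
    (hd : d * (ζ ^ 2 - ζ) = 1) (n : ℕ) :
    ∀ a ∈ stmtBnIdeal K n, stmtG K ζ d n a = 0 := by
  have h1 : (C ζ ^ 2 + C ζ + 1 : MvPolynomial (Fin (n + 1) × Fin 2) K) = 0 := by
    have := congrArg (C : K → MvPolynomial (Fin (n + 1) × Fin 2) K) hsum
    simpa [C_pow] using this
  have h2 : (C d * (C ζ ^ 2 - C ζ) : MvPolynomial (Fin (n + 1) × Fin 2) K) = 1 := by
    have := congrArg (C : K → MvPolynomial (Fin (n + 1) × Fin 2) K) hd
    simpa [C_pow] using this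
  intro a ha
  rw [stmtBnIdeal, Ideal.span] at ha
  induction ha using Submodule.span_induction with
  | zero => exact map_zero _
  | add x y _ _ hx hy => rw [map_add, hx, hy, add_zero]
  | smul r x _ hx => rw [smul_eq_mul, map_mul, hx, mul_zero]
  | mem x hx =>
    rcases hx with ⟨i, rfl⟩ | ⟨i, rfl⟩
    · rw [stmtG, AlgHom.comp_apply, Ideal.Quotient.mkₐ_eq_mk, Ideal.Quotient.eq_zero_iff_mem]
      convert (zero_mem (stmtZnIdeal K n)) using 2
      simp only [stmtGp, map_add, map_mul, aeval_X,
        show ((0 : Fin 3) : ℕ) = 0 from rfl, show ((1 : Fin 3) : ℕ) = 1 from rfl,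
        show ((2 : Fin 3) : ℕ) = 2 from rfl]
      norm_num
      linear_combination (C d * C ζ ^ 2 * (1 - C ζ + C ζ ^ 3 - C ζ ^ 5 + C ζ ^ 6) * X (i, 0)
        - C d * C ζ * (1 - C ζ + C ζ ^ 2) * X (i, 1)) * h1
    · rw [stmtG, AlgHom.comp_apply, Ideal.Quotient.mkₐ_eq_mk, Ideal.Quotient.eq_zero_iff_mem]
      have hc : (-(X (i, 0) * X (i, 1) - X (0, 0) * X (0, 1)) :
          MvPolynomial (Fin (n + 1) × Fin 2) K) ∈ stmtZnIdeal K n :=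
        neg_mem (stmtZn_mem K n i)
      convert hc using 2
      simp only [stmtGp, map_add, map_sub, map_mul, aeval_X,
        show ((0 : Fin 3) : ℕ) = 0 from rfl, show ((1 : Fin 3) : ℕ) = 1 from rfl,
        show ((2 : Fin 3) : ℕ) = 2 from rfl]
      norm_num
      linear_combination
        ((C d ^ 2 * C ζ ^ 8 * (1 - C ζ + C ζ ^ 3 - C ζ ^ 5 + C ζ ^ 6)) * (X (i, 0) ^ 2 - X (0, 0) ^ 2)
          + (C d ^ 2 * C ζ ^ 4 * (C ζ ^ 2 - C ζ + 1)) * (X (i, 1) ^ 2 - X (0, 1) ^ 2)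
          + (C d ^ 2 * ((C ζ ^ 2 - 3 * C ζ + 3)
              - (3 - 3 * C ζ + 3 * C ζ ^ 3 - 3 * C ζ ^ 4 + C ζ ^ 5 + 2 * C ζ ^ 6 - C ζ ^ 7
                 - C ζ ^ 8 + 2 * C ζ ^ 9 - C ζ ^ 10 + C ζ ^ 11)))
            * (X (i, 0) * X (i, 1) - X (0, 0) * X (0, 1))) * h1
        + (-(X (i, 0) * X (i, 1)) * (C d * (C ζ ^ 2 - C ζ) + 1)
            + (X (0, 0) * X (0, 1)) * (C d * (C ζ ^ 2 - C ζ) + 1)) * h2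

noncomputable def stmtFL (K : Type) [Field K] (ζ : K) (hsum : ζ ^ 2 + ζ + 1 = 0) (n : ℕ) :
    (MvPolynomial (Fin (n + 1) × Fin 2) K ⧸ stmtZnIdeal K n) →ₐ[K]
      (MvPolynomial (Fin (n + 1) × Fin 3) K ⧸ stmtBnIdeal K n) :=
  Ideal.Quotient.liftₐ _ (stmtF K ζ n) (stmtF_vanish K ζ hsum n)

noncomputable def stmtGL (K : Type) [Field K] (ζ d : K) (hsum : ζ ^ 2 + ζ + 1 = 0)
    (hd : d * (ζ ^ 2 - ζ) = 1) (n : ℕ) :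
    (MvPolynomial (Fin (n + 1) × Fin 3) K ⧸ stmtBnIdeal K n) →ₐ[K]
      (MvPolynomial (Fin (n + 1) × Fin 2) K ⧸ stmtZnIdeal K n) :=
  Ideal.Quotient.liftₐ _ (stmtG K ζ d n) (stmtG_vanish K ζ d hsum hd n)

lemma stmtFL_mk (K : Type) [Field K] (ζ : K) (hsum : ζ ^ 2 + ζ + 1 = 0) (n : ℕ)
    (p : MvPolynomial (Fin (n + 1) × Fin 2) K) :
    stmtFL K ζ hsum n (Ideal.Quotient.mk _ p)
      = Ideal.Quotient.mk _ (stmtFp K ζ n p) := by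
  simp [stmtFL, Ideal.Quotient.liftₐ_apply, Ideal.Quotient.lift_mk, stmtF]
  rfl

lemma stmtGL_mk (K : Type) [Field K] (ζ d : K) (hsum : ζ ^ 2 + ζ + 1 = 0)
    (hd : d * (ζ ^ 2 - ζ) = 1) (n : ℕ) (p : MvPolynomial (Fin (n + 1) × Fin 3) K) :
    stmtGL K ζ d hsum hd n (Ideal.Quotient.mk _ p)
      = Ideal.Quotient.mk _ (stmtGp K ζ d n p) := by
  simp [stmtGL, Ideal.Quotient.liftₐ_apply, Ideal.Quotient.lift_mk, stmtG]
  rfl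

lemma stmt_comp1 (K : Type) [Field K] (ζ d : K) (hsum : ζ ^ 2 + ζ + 1 = 0)
    (hd : d * (ζ ^ 2 - ζ) = 1) (n : ℕ) :
    (stmtFL K ζ hsum n).comp (stmtGL K ζ d hsum hd n) = AlgHom.id K _ := by
  have h1 : (C ζ ^ 2 + C ζ + 1 : MvPolynomial (Fin (n + 1) × Fin 3) K) = 0 := by
    have := congrArg (C : K → MvPolynomial (Fin (n + 1) × Fin 3) K) hsum
    simpa [C_pow] using this
  have h2 : (C d * (C ζ ^ 2 - C ζ) : MvPolynomial (Fin (n + 1) × Fin 3) K) = 1 := by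
    have := congrArg (C : K → MvPolynomial (Fin (n + 1) × Fin 3) K) hd
    simpa [C_pow] using this
  apply Ideal.Quotient.algHom_ext
  apply MvPolynomial.algHom_ext
  rintro ⟨i, k⟩
  simp only [AlgHom.comp_apply, Ideal.Quotient.mkₐ_eq_mk, AlgHom.id_apply]
  fin_cases k
  · rw [stmtGL_mk, stmtFL_mk]
    refine congrArg _ ?_
    simp only [stmtGp, stmtFp, map_sub, map_add, map_mul, map_pow, aeval_X, aeval_C,
      algebraMap_eq, show ((0 : Fin 3) : ℕ) = 0 from rfl, show ((0 : Fin 2) : ℕ) = 0 from rfl,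
      show ((1 : Fin 2) : ℕ) = 1 from rfl]
    norm_num [C_pow]
    linear_combination X (i, 0) * h2
  · rw [stmtGL_mk, stmtFL_mk]
    refine congrArg _ ?_
    simp only [stmtGp, stmtFp, map_sub, map_add, map_mul, map_pow, aeval_X, aeval_C,
      algebraMap_eq, show ((1 : Fin 3) : ℕ) = 1 from rfl, show ((0 : Fin 2) : ℕ) = 0 from rfl,
      show ((1 : Fin 2) : ℕ) = 1 from rfl]
    norm_num [C_pow]
    linear_combination (C d * C ζ ^ 3 * (C ζ - 1) * X (i, 0)
      - C d * C ζ * (C ζ - 1) * (C ζ ^ 3 - C ζ + 1) * X (i, 1)) * h1 + X (i, 1) * h2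
  · rw [stmtGL_mk, stmtFL_mk, Ideal.Quotient.eq]
    have key : stmtFp K ζ n (stmtGp K ζ d n (X (i, 2))) - X (i, 2)
        = -(X (i, 0) + X (i, 1) + X (i, 2)) := by
      simp only [stmtGp, stmtFp, map_sub, map_add, map_mul, map_pow, aeval_X, aeval_C,
        algebraMap_eq, show ((2 : Fin 3) : ℕ) = 2 from rfl, show ((0 : Fin 2) : ℕ) = 0 from rfl,
        show ((1 : Fin 2) : ℕ) = 1 from rfl]
      norm_num [C_pow]
      linear_combination (C d * C ζ * (C ζ - 1) * ((C ζ ^ 6 + C ζ ^ 3 - C ζ + 1) * X (i, 0)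
          - (C ζ ^ 7 + C ζ ^ 4 - C ζ ^ 3 + C ζ - 1) * X (i, 1))) * h1
        + (- X (i, 0) - X (i, 1)) * h2
    show (stmtFp K ζ n) ((stmtGp K ζ d n) (X (i, 2))) - X (i, 2) ∈ stmtBnIdeal K n
    rw [key]
    exact neg_mem (stmtBn_mem1 K n i)

lemma stmt_comp2 (K : Type) [Field K] (ζ d : K) (hsum : ζ ^ 2 + ζ + 1 = 0)
    (hd : d * (ζ ^ 2 - ζ) = 1) (n : ℕ) :
    (stmtGL K ζ d hsum hd n).comp (stmtFL K ζ hsum n) = AlgHom.id K _ := by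
  have h1 : (C ζ ^ 2 + C ζ + 1 : MvPolynomial (Fin (n + 1) × Fin 2) K) = 0 := by
    have := congrArg (C : K → MvPolynomial (Fin (n + 1) × Fin 2) K) hsum
    simpa [C_pow] using this
  have h2 : (C d * (C ζ ^ 2 - C ζ) : MvPolynomial (Fin (n + 1) × Fin 2) K) = 1 := by
    have := congrArg (C : K → MvPolynomial (Fin (n + 1) × Fin 2) K) hd
    simpa [C_pow] using this
  apply Ideal.Quotient.algHom_ext
  apply MvPolynomial.algHom_ext
  rintro ⟨i, j⟩
  simp only [AlgHom.comp_apply, Ideal.Quotient.mkₐ_eq_mk, AlgHom.id_apply]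
  fin_cases j
  · rw [stmtFL_mk, stmtGL_mk]
    refine congrArg _ ?_
    simp only [stmtGp, stmtFp, map_sub, map_add, map_mul, map_pow, aeval_X, aeval_C,
      algebraMap_eq, show ((0 : Fin 3) : ℕ) = 0 from rfl, show ((1 : Fin 3) : ℕ) = 1 from rfl,
      show ((0 : Fin 2) : ℕ) = 0 from rfl]
    norm_num [C_pow]
    linear_combination (- C d * C ζ * (C ζ ^ 4 - C ζ ^ 3 + C ζ - 1) * X (i, 0)
      + C d * C ζ * (C ζ - 1) * X (i, 1)) * h1 + X (i, 0) * h2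
  · rw [stmtFL_mk, stmtGL_mk]
    refine congrArg _ ?_
    simp only [stmtGp, stmtFp, map_sub, map_add, map_mul, map_pow, aeval_X, aeval_C,
      algebraMap_eq, show ((0 : Fin 3) : ℕ) = 0 from rfl, show ((1 : Fin 3) : ℕ) = 1 from rfl,
      show ((1 : Fin 2) : ℕ) = 1 from rfl]
    norm_num [C_pow]
    linear_combination (- C d * C ζ ^ 2 * (C ζ ^ 4 - C ζ ^ 3 + C ζ - 1) * X (i, 0)
      + C d * C ζ ^ 2 * (C ζ - 1) * X (i, 1)) * h1 + X (i, 1) * h2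

theorem stmt11 (K : Type) [Field K] (ζ : K) (hζ : IsPrimitiveRoot ζ 3) (n : ℕ) :
    ∃ e : (MvPolynomial (Fin (n + 1) × Fin 2) K ⧸ stmtZnIdeal K n)
            ≃ₐ[K] (MvPolynomial (Fin (n + 1) × Fin 3) K ⧸ stmtBnIdeal K n),
      ∀ (i : Fin (n + 1)) (j : Fin 2),
        e (Ideal.Quotient.mk (stmtZnIdeal K n) (X (i, j)))
          = Ideal.Quotient.mk (stmtBnIdeal K n)
              (X (i, 0) - C (ζ ^ ((j : ℕ) + 1)) * X (i, 1)) := by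
  have hC : ζ ^ 3 = 1 := hζ.pow_eq_one
  have hne : ζ ≠ 1 := hζ.ne_one (by norm_num)
  have hsum : ζ ^ 2 + ζ + 1 = 0 := by
    rcases mul_eq_zero.mp (show (ζ - 1) * (ζ ^ 2 + ζ + 1) = 0 by linear_combination hC) with h | h
    · exact absurd (sub_eq_zero.mp h) hne
    · exact h
  have hz : ζ ≠ 0 := by
    intro h
    rw [h] at hC
    simp at hC
  have hδ : ζ ^ 2 - ζ ≠ 0 := by
    intro h
    rcases mul_eq_zero.mp (show ζ * (ζ - 1) = 0 by linear_combination h) with h' | h'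
    · exact hz h'
    · exact hne (sub_eq_zero.mp h')
  have hd : (ζ ^ 2 - ζ)⁻¹ * (ζ ^ 2 - ζ) = 1 := inv_mul_cancel₀ hδ
  refine ⟨AlgEquiv.ofAlgHom (stmtFL K ζ hsum n) (stmtGL K ζ (ζ ^ 2 - ζ)⁻¹ hsum hd n)
    (stmt_comp1 K ζ (ζ ^ 2 - ζ)⁻¹ hsum hd n) (stmt_comp2 K ζ (ζ ^ 2 - ζ)⁻¹ hsum hd n), ?_⟩
  intro i j
  show stmtFL K ζ hsum n (Ideal.Quotient.mk _ (X (i, j))) = _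
  rw [stmtFL_mk]
  refine congrArg _ ?_
  simp [stmtFp]
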